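/- Fix α > 2. In any optimal solution {Dᵢ*} of the PBA problem inf Σᵢ Dᵢ + (λ/2)Σᵢ log(σᵢ²/Dᵢ − (α−1)) subject to Dᵢ ≤ σᵢ²/α with positive total rate, at most one index i satisfies σᵢ²/(2(α−1)) < Dᵢ* < σᵢ²/α. -/

import Mathlib

/-- Strict midpoint concavity of `x ↦ log (s/x - c)` in the concave region `x > s/(2c)`. -/
lemma key_concave (s c x ε : ℝ) (hc : 0 < c) (hε : 0 < ε) (hεx : ε < x)
    (hup : 0 < s - c * (x + ε)) (hconc : s < 2 * c * x) :
    Real.log (s / (x + ε) - c) + Real.log (s / (x - ε) - c)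
      < 2 * Real.log (s / x - c) := by
  have hx : 0 < x := lt_trans hε hεx
  have hy1 : 0 < x + ε := by linarith
  have hy2 : 0 < x - ε := by linarith
  have ha1 : 0 < s - c * (x + ε) := hup
  have ha : 0 < s - c * x := by nlinarith
  have ha2 : 0 < s - c * (x - ε) := by nlinarith
  have e1 : s / (x + ε) - c = (s - c * (x + ε)) / (x + ε) := by field_simp
  have e2 : s / (x - ε) - c = (s - c * (x - ε)) / (x - ε) := by field_simp
  have e : s / x - c = (s - c * x) / x := by field_simp
  rw [e1, e2, e, Real.log_div ha1.ne' hy1.ne', Real.log_div ha2.ne' hy2.ne',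
    Real.log_div ha.ne' hx.ne']
  have h1 : Real.log (s - c * (x + ε)) + Real.log (s - c * (x - ε))
      = Real.log ((s - c * (x + ε)) * (s - c * (x - ε))) :=
    (Real.log_mul ha1.ne' ha2.ne').symm
  have h2 : Real.log (x + ε) + Real.log (x - ε)
      = Real.log ((x + ε) * (x - ε)) := (Real.log_mul hy1.ne' hy2.ne').symm
  have h3 : (2:ℝ) * Real.log (s - c * x) = Real.log ((s - c * x) * (s - c * x)) := by
    rw [Real.log_mul ha.ne' ha.ne']; ring
  have h4 : (2:ℝ) * Real.log x = Real.log (x * x) := by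
    rw [Real.log_mul hx.ne' hx.ne']; ring
  have hkey : Real.log ((s - c * (x + ε)) * (s - c * (x - ε))) + Real.log (x * x)
      < Real.log ((s - c * x) * (s - c * x)) + Real.log ((x + ε) * (x - ε)) := by
    rw [← Real.log_mul (by positivity) (by positivity),
        ← Real.log_mul (by positivity) (by nlinarith)]
    apply Real.log_lt_log (by positivity)
    have hs : 0 < s := by nlinarith
    nlinarith [mul_pos (mul_pos hε hε) (mul_pos (show 0 < 2*c*x - s by linarith) hs)]
  linarith [h1, h2, h3, h4, hkey]

/-- Sum after changing two coordinates. -/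
lemma sum_update_two {d : ℕ} (i j : Fin d) (hij : i ≠ j) (F : Fin d → ℝ → ℝ)
    (D : Fin d → ℝ) (a b : ℝ) :
    ∑ k, F k (if k = i then a else if k = j then b else D k)
      = ∑ k, F k (D k) + (F i a - F i (D i)) + (F j b - F j (D j)) := by
  have h : ∑ k, (F k (if k = i then a else if k = j then b else D k) - F k (D k))
      = (F i a - F i (D i)) + (F j b - F j (D j)) := by
    rw [← Finset.sum_subset (Finset.subset_univ ({i, j} : Finset (Fin d)))]
    · rw [Finset.sum_pair hij]
      simp [hij, hij.symm]
    · intro x _ hx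
      simp only [Finset.mem_insert, Finset.mem_singleton, not_or] at hx
      simp [hx.1, hx.2]
  rw [Finset.sum_sub_distrib] at h
  linarith

/-- Lemma 2: in any optimal solution of the PBA problem with positive total
rate, at most one component lies strictly in the concave region
`(σᵢ²/(2(α−1)), σᵢ²/α)` of its rate function. -/
theorem stmt_13 (d : ℕ) (s2 : Fin d → ℝ) (α lam : ℝ)
    (hs2_pos : ∀ i, 0 < s2 i)
    (hα : 2 < α) (hlam : 0 < lam)
    (D : Fin d → ℝ)
    (hD_feas : ∀ i, 0 < D i ∧ D i ≤ s2 i / α)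
    (hrate_pos : 0 < ∑ i, Real.log (s2 i / D i - (α - 1)))
    (hD_min : ∀ E : Fin d → ℝ, (∀ i, 0 < E i ∧ E i ≤ s2 i / α) →
      ∑ i, D i + lam / 2 * ∑ i, Real.log (s2 i / D i - (α - 1)) ≤
        ∑ i, E i + lam / 2 * ∑ i, Real.log (s2 i / E i - (α - 1))) :
    ∀ i j : Fin d, i ≠ j →
      s2 i / (2 * (α - 1)) < D i → D i < s2 i / α →
      s2 j / (2 * (α - 1)) < D j → D j < s2 j / α → False := by
  intro i j hij hci hui hcj huj
  have hα0 : 0 < α := by linarith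
  have hc : 0 < α - 1 := by linarith
  have hDi := hD_feas i
  have hDj := hD_feas j
  set ε : ℝ := min (min (D i) (D j)) (min (s2 i / α - D i) (s2 j / α - D j)) / 2 with hεdef
  have hgapi : 0 < s2 i / α - D i := by linarith
  have hgapj : 0 < s2 j / α - D j := by linarith
  have hε : 0 < ε := by
    apply div_pos _ (by norm_num)
    exact lt_min (lt_min hDi.1 hDj.1) (lt_min hgapi hgapj)
  have hεDi : ε < D i := by
    have : ε ≤ D i / 2 := by
      rw [hεdef]; gcongr
      exact le_trans (min_le_left _ _) (min_le_left _ _)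
    linarith
  have hεDj : ε < D j := by
    have : ε ≤ D j / 2 := by
      rw [hεdef]; gcongr
      exact le_trans (min_le_left _ _) (min_le_right _ _)
    linarith
  have hεgi : D i + ε < s2 i / α := by
    have : ε ≤ (s2 i / α - D i) / 2 := by
      rw [hεdef]; gcongr
      exact le_trans (min_le_right _ _) (min_le_left _ _)
    linarith
  have hεgj : D j + ε < s2 j / α := by
    have : ε ≤ (s2 j / α - D j) / 2 := by
      rw [hεdef]; gcongr
      exact le_trans (min_le_right _ _) (min_le_right _ _)
    linarith
  have hsi : 0 < s2 i := hs2_pos i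
  have hsj : 0 < s2 j := hs2_pos j
  have hdivi : 0 < s2 i / α := div_pos hsi hα0
  have hdivj : 0 < s2 j / α := div_pos hsj hα0
  have hupi : 0 < s2 i - (α - 1) * (D i + ε) := by
    have h1 : (α - 1) * (D i + ε) < (α - 1) * (s2 i / α) :=
      mul_lt_mul_of_pos_left hεgi hc
    have h2 : (α - 1) * (s2 i / α) = s2 i - s2 i / α := by field_simp
    linarith
  have hupj : 0 < s2 j - (α - 1) * (D j + ε) := by
    have h1 : (α - 1) * (D j + ε) < (α - 1) * (s2 j / α) :=
      mul_lt_mul_of_pos_left hεgj hc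
    have h2 : (α - 1) * (s2 j / α) = s2 j - s2 j / α := by field_simp
    linarith
  have hconci : s2 i < 2 * (α - 1) * D i := by
    have := (div_lt_iff₀ (by positivity : (0:ℝ) < 2 * (α - 1))).mp hci
    linarith
  have hconcj : s2 j < 2 * (α - 1) * D j := by
    have := (div_lt_iff₀ (by positivity : (0:ℝ) < 2 * (α - 1))).mp hcj
    linarith
  have hkeyi := key_concave (s2 i) (α - 1) (D i) ε hc hε hεDi hupi hconci
  have hkeyj := key_concave (s2 j) (α - 1) (D j) ε hc hε hεDj hupj hconcj
  set E1 : Fin d → ℝ := fun k => if k = i then D i + ε else if k = j then D j - ε else D k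
    with hE1def
  set E2 : Fin d → ℝ := fun k => if k = i then D i - ε else if k = j then D j + ε else D k
    with hE2def
  have hE1i : E1 i = D i + ε := by simp [hE1def]
  have hE1j : E1 j = D j - ε := by simp [hE1def, hij.symm]
  have hE2i : E2 i = D i - ε := by simp [hE2def]
  have hE2j : E2 j = D j + ε := by simp [hE2def, hij.symm]
  have hE1feas : ∀ k, 0 < E1 k ∧ E1 k ≤ s2 k / α := by
    intro k
    by_cases hk : k = i
    · subst hk; rw [hE1i]; exact ⟨by linarith [hDi.1], le_of_lt hεgi⟩
    · by_cases hk' : k = j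
      · subst hk'; rw [hE1j]; exact ⟨by linarith, by linarith [hDj.2]⟩
      · have : E1 k = D k := by simp [hE1def, hk, hk']
        rw [this]; exact hD_feas k
  have hE2feas : ∀ k, 0 < E2 k ∧ E2 k ≤ s2 k / α := by
    intro k
    by_cases hk : k = i
    · subst hk; rw [hE2i]; exact ⟨by linarith, by linarith [hDi.2]⟩
    · by_cases hk' : k = j
      · subst hk'; rw [hE2j]; exact ⟨by linarith [hDj.1], le_of_lt hεgj⟩
      · have : E2 k = D k := by simp [hE2def, hk, hk']
        rw [this]; exact hD_feas k
  have hsum1 : ∑ k, E1 k = ∑ k, D k := by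
    have h := sum_update_two i j hij (fun _ x => x) D (D i + ε) (D j - ε)
    rw [hE1def, h]; ring
  have hsum2 : ∑ k, E2 k = ∑ k, D k := by
    have h := sum_update_two i j hij (fun _ x => x) D (D i - ε) (D j + ε)
    rw [hE2def, h]; ring
  have hlog1 : ∑ k, Real.log (s2 k / E1 k - (α - 1))
      = ∑ k, Real.log (s2 k / D k - (α - 1))
        + (Real.log (s2 i / (D i + ε) - (α - 1)) - Real.log (s2 i / D i - (α - 1)))
        + (Real.log (s2 j / (D j - ε) - (α - 1)) - Real.log (s2 j / D j - (α - 1))) := by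
    have h := sum_update_two i j hij (fun k x => Real.log (s2 k / x - (α - 1))) D
      (D i + ε) (D j - ε)
    rw [hE1def]
    exact h
  have hlog2 : ∑ k, Real.log (s2 k / E2 k - (α - 1))
      = ∑ k, Real.log (s2 k / D k - (α - 1))
        + (Real.log (s2 i / (D i - ε) - (α - 1)) - Real.log (s2 i / D i - (α - 1)))
        + (Real.log (s2 j / (D j + ε) - (α - 1)) - Real.log (s2 j / D j - (α - 1))) := by
    have h := sum_update_two i j hij (fun k x => Real.log (s2 k / x - (α - 1))) D
      (D i - ε) (D j + ε)
    rw [hE2def]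
    exact h
  have h1 := hD_min E1 hE1feas
  have h2 := hD_min E2 hE2feas
  rw [hsum1, hlog1] at h1
  rw [hsum2, hlog2] at h2
  set R := ∑ k, Real.log (s2 k / D k - (α - 1)) with hR
  set A1 := Real.log (s2 i / (D i + ε) - (α - 1)) - Real.log (s2 i / D i - (α - 1))
  set B1 := Real.log (s2 j / (D j - ε) - (α - 1)) - Real.log (s2 j / D j - (α - 1))
  set A2 := Real.log (s2 i / (D i - ε) - (α - 1)) - Real.log (s2 i / D i - (α - 1))
  set B2 := Real.log (s2 j / (D j + ε) - (α - 1)) - Real.log (s2 j / D j - (α - 1))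
  have hlampos : (0:ℝ) < lam / 2 := by positivity
  have hΔ1 : 0 ≤ A1 + B1 := by
    have hmul : lam / 2 * R ≤ lam / 2 * (R + A1 + B1) := by linarith
    have := (mul_le_mul_iff_right₀ hlampos).mp hmul
    linarith
  have hΔ2 : 0 ≤ A2 + B2 := by
    have hmul : lam / 2 * R ≤ lam / 2 * (R + A2 + B2) := by linarith
    have := (mul_le_mul_iff_right₀ hlampos).mp hmul
    linarith
  have : A1 + A2 + (B1 + B2) < 0 := by
    simp only [A1, A2, B1, B2]
    linarith [hkeyi, hkeyj]
  linarith
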